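/- For each positive integer n, s(n) = 4·c(n) + n, where c is the Conolly-Fox sequence. -/

import Mathlib

/-- `Alist k` is the list `A_{k+1}`: `A_1 = [5]`, `A_{k+1} = A_k ++ A_k ++ [1]`. -/
def Alist : ℕ → List ℕ
  | 0 => [5]
  | k+1 => Alist k ++ Alist k ++ [1]

/-- `aseq n` is the `n`-th term (1-indexed) of the limit of the lists `A_k`;
`aseq 0 = 0` by convention. -/
def aseq (n : ℕ) : ℕ := (Alist n).getD (n - 1) 0

/-- Partial sums: `s n = a_1 + ⋯ + a_n`, `s 0 = 0`. -/
def s (n : ℕ) : ℕ := ∑ i ∈ Finset.Icc 1 n, aseq i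

def F : ℕ → ℕ
  | 0 => 0
  | (n+1) =>
      2 ^ (Nat.log 2 (n+2) - 1) + F (n + 2 - 2 ^ (Nat.log 2 (n+2)))
  decreasing_by
    have h1 : 0 < Nat.log 2 (n+2) := Nat.log_pos (by norm_num) (by omega)
    have h2 : 2 ^ 1 ≤ 2 ^ (Nat.log 2 (n+2)) := Nat.pow_le_pow_right (by norm_num) h1
    omega

lemma F_zero : F 0 = 0 := by simp [F]

lemma F_succ (n : ℕ) :
    F (n+1) = 2 ^ (Nat.log 2 (n+2) - 1) + F (n + 2 - 2 ^ (Nat.log 2 (n+2))) := by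
  conv_lhs => rw [F]

lemma Alist_length (k : ℕ) : (Alist k).length = 2 ^ (k+1) - 1 := by
  induction k with
  | zero => simp [Alist]
  | succ k ih =>
    have h : 1 ≤ 2 ^ (k+1) := Nat.one_le_two_pow
    have h2 : (2:ℕ) ^ (k+2) = 2 * 2 ^ (k+1) := by ring
    simp [Alist, ih]; omega

lemma Alist_prefix {k m : ℕ} (h : k ≤ m) : Alist k <+: Alist m := by
  induction m with
  | zero => simp_all
  | succ m ih =>
    rcases Nat.eq_or_lt_of_le h with rfl | h'
    · exact List.prefix_refl _
    · exact (ih (by omega)).trans ⟨Alist m ++ [1], by simp [Alist]⟩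

lemma aseq_eq {k n : ℕ} (h1 : 1 ≤ n) (h2 : n ≤ 2 ^ (k+1) - 1) :
    aseq n = (Alist k).getD (n-1) 0 := by
  have hn : n - 1 < (Alist n).length := by
    rw [Alist_length]
    have h3 := Nat.lt_two_pow_self (n := n)
    have h4 : (2:ℕ)^n ≤ 2^(n+1) := Nat.pow_le_pow_right (by norm_num) (by omega)
    omega
  have hk : n - 1 < (Alist k).length := by rw [Alist_length]; omega
  unfold aseq
  rw [List.getD_eq_getElem _ _ hn, List.getD_eq_getElem _ _ hk]
  rcases le_total k n with h | h
  · exact ((Alist_prefix h).getElem hk).symm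
  · exact (Alist_prefix h).getElem hn

lemma s_zero : s 0 = 0 := by simp [s]

lemma s_succ (n : ℕ) : s (n+1) = s n + aseq (n+1) := by
  rw [s, s, Finset.sum_Icc_succ_top (by omega)]

lemma s_take {k n : ℕ} (h : n ≤ 2 ^ (k+1) - 1) :
    s n = ((Alist k).take n).sum := by
  induction n with
  | zero => simp [s_zero]
  | succ n ih =>
    have hlt : n < (Alist k).length := by rw [Alist_length]; omega
    rw [s_succ, ih (by omega), List.sum_take_succ _ _ hlt]
    congr 1
    rw [aseq_eq (by omega) h]
    exact List.getD_eq_getElem _ _ hlt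

lemma Alist_sum (k : ℕ) : (Alist k).sum = 6 * 2 ^ k - 1 := by
  induction k with
  | zero => simp [Alist]
  | succ k ih =>
    have h : 1 ≤ 2 ^ k := Nat.one_le_two_pow
    have h2 : (2:ℕ) ^ (k+1) = 2 * 2 ^ k := by ring
    simp [Alist, ih]; omega

lemma s_L (k : ℕ) : s (2 ^ (k+1) - 1) = 6 * 2 ^ k - 1 := by
  rw [s_take (le_refl _), ← Alist_length, List.take_length, Alist_sum]

lemma s_add {k r : ℕ} (h : r ≤ 2 ^ (k+1) - 1) :
    s ((2 ^ (k+1) - 1) + r) = (6 * 2 ^ k - 1) + s r := by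
  have h1 : 1 ≤ 2 ^ (k+1) := Nat.one_le_two_pow
  have h2 : (2:ℕ) ^ (k+2) = 2 * 2 ^ (k+1) := by ring
  have hle : (2 ^ (k+1) - 1) + r ≤ 2 ^ (k+2) - 1 := by omega
  rw [s_take hle, s_take h]
  show ((Alist k ++ Alist k ++ [1]).take _).sum = _
  rw [List.append_assoc, List.take_append, List.sum_append,
    Alist_length]
  have ht : (Alist k).take (2 ^ (k+1) - 1 + r) = Alist k := by
    apply List.take_of_length_le; rw [Alist_length]; omega
  rw [ht, Alist_sum]
  congr 1
  have e1 : 2 ^ (k+1) - 1 + r - (2 ^ (k+1) - 1) = r := by omega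
  rw [e1, List.take_append, Alist_length]
  have e2 : r - (2 ^ (k+1) - 1) = 0 := by omega
  simp [e2]

lemma F_block {k r : ℕ} (h : r ≤ 2 ^ (k+1) - 1) :
    F ((2 ^ (k+1) - 1) + r) = 2 ^ k + F r := by
  have h1 : 2 ≤ 2 ^ (k+1) := by
    have : (2:ℕ)^1 ≤ 2^(k+1) := Nat.pow_le_pow_right (by norm_num) (by omega)
    simpa using this
  obtain ⟨m, hm⟩ : ∃ m, (2 ^ (k+1) - 1) + r = m + 1 := ⟨(2 ^ (k+1) - 1) + r - 1, by omega⟩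
  have hm2 : m + 2 = 2 ^ (k+1) + r := by omega
  have hlog : Nat.log 2 (m+2) = k+1 := by
    rw [hm2]
    apply Nat.log_eq_of_pow_le_of_lt_pow
    · omega
    · have h2 : (2:ℕ) ^ (k+2) = 2 * 2 ^ (k+1) := by ring
      omega
  rw [hm, F_succ, hlog]
  have e3 : m + 2 - 2 ^ (k+1) = r := by omega
  have e4 : k + 1 - 1 = k := by omega
  rw [e3, e4]

lemma decomp {n : ℕ} (h : 1 ≤ n) :
    ∃ k r, r ≤ 2 ^ (k+1) - 1 ∧ n = (2 ^ (k+1) - 1) + r := by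
  have hK : 1 ≤ Nat.log 2 (n+1) :=
    (Nat.le_log_iff_pow_le (by norm_num) (by omega)).mpr (by omega)
  set K := Nat.log 2 (n+1) with hKdef
  have hlo : 2 ^ K ≤ n + 1 := Nat.pow_log_le_self 2 (by omega)
  have hhi : n + 1 < 2 ^ (K+1) := Nat.lt_pow_succ_log_self (by norm_num) _
  have hK1 : K - 1 + 1 = K := by omega
  refine ⟨K - 1, n - (2 ^ K - 1), ?_, ?_⟩
  · rw [hK1]
    have h2 : (2:ℕ) ^ (K+1) = 2 * 2 ^ K := by ring
    omega
  · rw [hK1]; omega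

lemma F_bounds : ∀ n : ℕ, F n ≤ n ∧ (1 ≤ n → n + 1 ≤ 2 * F n) := by
  intro n
  induction n using Nat.strong_induction_on with
  | _ n ih =>
    rcases Nat.eq_zero_or_pos n with rfl | hn
    · simp [F_zero]
    · obtain ⟨k, r, hr, rfl⟩ := decomp hn
      have h1 : 2 ≤ 2 ^ (k+1) := by
        have : (2:ℕ)^1 ≤ 2^(k+1) := Nat.pow_le_pow_right (by norm_num) (by omega)
        simpa using this
      have hrlt : r < (2 ^ (k+1) - 1) + r := by omega
      have hpk : (2:ℕ) ^ (k+1) = 2 * 2 ^ k := by ring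
      obtain ⟨ihle, ihlb⟩ := ih r hrlt
      rw [F_block hr]
      constructor
      · omega
      · intro _
        rcases Nat.eq_zero_or_pos r with rfl | hr1
        · rw [F_zero]; omega
        · have := ihlb hr1; omega

lemma F_one : F 1 = 1 := by
  have := F_block (k := 0) (r := 0) (by norm_num)
  simpa [F_zero] using this

lemma F_two : F 2 = 2 := by
  have := F_block (k := 0) (r := 1) (by norm_num)
  simpa [F_one] using this

lemma F_three : F 3 = 2 := by
  have := F_block (k := 1) (r := 0) (by norm_num)
  simpa [F_zero] using this

lemma F_L (k : ℕ) : F (2 ^ (k+1) - 1) = 2 ^ k := by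
  have := F_block (k := k) (r := 0) (by omega)
  simpa [F_zero] using this

lemma F_Lsub1 (k : ℕ) : F (2 ^ (k+2) - 2) = 2 ^ (k+1) := by
  have h1 : 1 ≤ 2 ^ (k+1) := Nat.one_le_two_pow
  have e : 2 ^ (k+2) - 2 = (2 ^ (k+1) - 1) + (2 ^ (k+1) - 1) := by
    have h2 : (2:ℕ) ^ (k+2) = 2 * 2 ^ (k+1) := by ring
    omega
  rw [e, F_block (le_refl _), F_L]
  have : (2:ℕ) ^ (k+1) = 2 * 2 ^ k := by ring
  omega

lemma F_P (k : ℕ) : F (2 ^ (k+1)) = 2 ^ k + 1 := by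
  have h1 : 1 ≤ 2 ^ (k+1) := Nat.one_le_two_pow
  have e : 2 ^ (k+1) = (2 ^ (k+1) - 1) + 1 := by omega
  rw [e, F_block (by omega), F_one]

lemma F_rec : ∀ n : ℕ, 2 ≤ n → F (n+1) = F (n + 1 - F n) + F (n - F (n-1)) := by
  intro n
  induction n using Nat.strong_induction_on with
  | _ n ih =>
    intro h2
    rcases eq_or_lt_of_le h2 with rfl | h3
    · norm_num [F_one, F_two, F_three]
    · have hn4 : 4 ≤ n + 1 := by omega
      set K := Nat.log 2 (n+1) with hKdef
      have hK2 : 2 ≤ K :=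
        (Nat.le_log_iff_pow_le (by norm_num) (by omega)).mpr (by omega)
      set k := K - 1 with hkdef
      have hk1 : 1 ≤ k := by omega
      have hKk : K = k + 1 := by omega
      have hlo : 2 ^ (k+1) ≤ n + 1 := by rw [← hKk]; exact Nat.pow_log_le_self 2 (by omega)
      have hhi : n + 1 < 2 ^ (k+2) := by
        have := Nat.lt_pow_succ_log_self (b := 2) (by norm_num) (n+1)
        rwa [← hKdef, hKk] at this
      have hpk : (2:ℕ) ^ (k+1) = 2 * 2 ^ k := by ring
      have hpk2 : (2:ℕ) ^ (k+2) = 4 * 2 ^ k := by ring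
      have hpk0 : 2 ≤ 2 ^ k := by
        calc (2:ℕ) = 2^1 := by norm_num
        _ ≤ 2^k := Nat.pow_le_pow_right (by norm_num) hk1
      set P := 2 ^ k with hP
      set L := 2 ^ (k+1) - 1 with hL
      have hLP : L = 2 * P - 1 := by omega
      set r := n + 1 - L with hr
      have hr1 : 1 ≤ r := by omega
      have hrL : r ≤ L + 1 := by omega
      have hFL : F L = P := F_L k
      have hFL1 : F (L - 1) = P := by
        have h5 := F_Lsub1 (k-1)
        have e1 : k - 1 + 2 = k + 1 := by omega
        have e2 : k - 1 + 1 = k := by omega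
        rw [e1, e2] at h5
        have eL : L - 1 = 2^(k+1) - 2 := by omega
        rw [eL]; exact h5
      have hFP : F P = 2^(k-1) + 1 := by
        have h5 := F_P (k-1)
        have e2 : k - 1 + 1 = k := by omega
        rwa [e2] at h5
      have hFP1 : F (P - 1) = 2^(k-1) := by
        have h5 := F_L (k-1)
        have e2 : k - 1 + 1 = k := by omega
        rwa [e2] at h5
      have hpkk : 2 ^ (k-1) + 2 ^ (k-1) = P := by
        have h5 : (2:ℕ)^k = 2 * 2^(k-1) := by
          rw [← pow_succ']
          congr 1; omega
        omega
      rcases eq_or_lt_of_le hrL with hcase | hlt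
      · -- r = L + 1, n = 2L
        have hn : n = 2 * L := by omega
        have hFn : F n = 2 * P := by
          have e : n = L + L := by omega
          rw [e, F_block (le_refl _), hFL]; omega
        have hFn1 : F (n-1) = 2 * P := by
          have e : n - 1 = L + (L - 1) := by omega
          rw [e, F_block (by omega), hFL1]; omega
        have hLHS : F (n+1) = 2 * P := by
          have e : n + 1 = (2 ^ (k+2) - 1) + 0 := by omega
          rw [e, F_block (by omega), F_zero]
          have : (2:ℕ)^(k+1) = 2 * 2^k := by ring
          omega
        rw [hLHS, hFn, hFn1]
        have e1 : n + 1 - 2 * P = L := by omega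
        have e2 : n - 2 * P = L - 1 := by omega
        rw [e1, e2, hFL, hFL1]
        omega
      · have hrLe : r ≤ L := by omega
        have hn : n = L + (r - 1) := by omega
        have hFn : F n = P + F (r-1) := by rw [hn, F_block (by omega)]
        have hLHS : F (n+1) = P + F r := by
          have e : n + 1 = L + r := by omega
          rw [e, F_block hrLe]
        rcases eq_or_lt_of_le hr1 with hc1 | hr2
        · -- r = 1 : n = L
          have hrr : r = 1 := hc1.symm
          have hnL : n = L := by omega
          have hFn' : F n = P := by rw [hnL]; exact hFL
          have hFn1 : F (n-1) = P := by rw [hnL]; exact hFL1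
          rw [hLHS, hFn', hFn1, hrr, F_one]
          have e1 : n + 1 - P = P := by omega
          have e2 : n - P = P - 1 := by omega
          rw [e1, e2, hFP, hFP1]
          omega
        · rcases eq_or_lt_of_le (show 2 ≤ r from hr2) with hc2 | hr3
          · -- r = 2 : n = L + 1
            have hrr : r = 2 := by omega
            have hFn1 : F (n-1) = P := by
              have e : n - 1 = L := by omega
              rw [e, hFL]
            have hFn' : F n = P + 1 := by
              rw [hFn, hrr]; norm_num [F_one]
            rw [hLHS, hFn', hFn1, hrr, F_two]
            have e1 : n + 1 - (P + 1) = P := by omega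
            have e2 : n - P = P := by omega
            rw [e1, e2, hFP]
            omega
          · -- 3 ≤ r ≤ L
            have hr3' : 3 ≤ r := hr3
            have hFn1 : F (n-1) = P + F (r-2) := by
              have e : n - 1 = L + (r - 2) := by omega
              rw [e, F_block (by omega)]
            obtain ⟨hb1, hb1'⟩ := F_bounds (r-1)
            obtain ⟨hb2, hb2'⟩ := F_bounds (r-2)
            have hlb1 := hb1' (by omega)
            have hlb2 := hb2' (by omega)
            obtain ⟨t, ht⟩ : ∃ t, r - F (r-1) = t := ⟨_, rfl⟩
            obtain ⟨t', ht'⟩ : ∃ t', r - 1 - F (r-2) = t' := ⟨_, rfl⟩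
            have ht1 : 1 ≤ t := by omega
            have ht1' : 1 ≤ t' := by omega
            have htP : t ≤ P - 1 := by omega
            have htP' : t' ≤ P - 1 := by omega
            have ekk : k - 1 + 1 = k := by omega
            have e1 : n + 1 - F n = (2 ^ (k-1+1) - 1) + t := by
              rw [hFn, ekk]; omega
            have e2 : n - F (n-1) = (2 ^ (k-1+1) - 1) + t' := by
              rw [hFn1, ekk]; omega
            have hblk1 : F (n + 1 - F n) = 2^(k-1) + F t := by
              rw [e1, F_block (by rw [ekk]; omega)]
            have hblk2 : F (n - F (n-1)) = 2^(k-1) + F t' := by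
              rw [e2, F_block (by rw [ekk]; omega)]
            have hIH := ih (r-1) (by omega) (by omega)
            have er : r - 1 + 1 = r := by omega
            have er2 : r - 1 - 1 = r - 2 := by omega
            rw [er, er2, ht, ht'] at hIH
            rw [hLHS, hblk1, hblk2, hIH]
            omega

theorem s_eq_F : ∀ n : ℕ, s n = 4 * F n + n := by
  intro n
  induction n using Nat.strong_induction_on with
  | _ n ih =>
    rcases Nat.eq_zero_or_pos n with rfl | hn
    · simp [s_zero, F_zero]
    · obtain ⟨k, r, hr, rfl⟩ := decomp hn
      have h1 : 2 ≤ 2 ^ (k+1) := by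
        have : (2:ℕ)^1 ≤ 2^(k+1) := Nat.pow_le_pow_right (by norm_num) (by omega)
        simpa using this
      have hpk : (2:ℕ)^(k+1) = 2 * 2^k := by ring
      rw [s_add hr, F_block hr, ih r (by omega)]
      omega

/-- For each positive integer `n`, `s(n) = 4·c(n) + n`, where `c` is the
Conolly–Fox sequence: `c(1) = 1`, `c(2) = 2`, and
`c(n+1) = c(n+1−c(n)) + c(n−c(n−1))` for `n ≥ 2`. -/
theorem s_eq_conolly_fox (c : ℕ → ℕ) (h1 : c 1 = 1) (h2 : c 2 = 2)
    (hrec : ∀ n : ℕ, 2 ≤ n → c (n + 1) = c (n + 1 - c n) + c (n - c (n - 1))) :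
    ∀ n : ℕ, 1 ≤ n → s n = 4 * c n + n := by
  have hc : ∀ n : ℕ, 1 ≤ n → c n = F n := by
    intro n
    induction n using Nat.strong_induction_on with
    | _ n ih =>
      intro hn
      match n, hn with
      | 1, _ => rw [h1, F_one]
      | 2, _ => rw [h2, F_two]
      | (m+3), _ =>
        have ih' : ∀ j < m + 3, 1 ≤ j → c j = F j := fun j hj h1j => ih j hj h1j
        set n := m + 2 with hndef
        have hn2 : 2 ≤ n := by omega
        obtain ⟨hFle, hFlb⟩ := F_bounds n
        obtain ⟨hFle1, hFlb1⟩ := F_bounds (n-1)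
        have hFlb := hFlb (by omega)
        have hFlb1 := hFlb1 (by omega)
        have hcn : c n = F n := ih' n (by omega) (by omega)
        have hcn1 : c (n-1) = F (n-1) := ih' (n-1) (by omega) (by omega)
        have key := hrec n hn2
        rw [hcn, hcn1] at key
        have ha1 : c (n + 1 - F n) = F (n + 1 - F n) := ih' _ (by omega) (by omega)
        have ha2 : c (n - F (n-1)) = F (n - F (n-1)) := ih' _ (by omega) (by omega)
        rw [ha1, ha2] at key
        show c (n+1) = F (n+1)
        rw [key, F_rec n hn2]
  intro n hn
  rw [s_eq_F, hc n hn]
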